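/- Let n ≥ 1, μ ∈ ℝⁿ, Σ a real symmetric positive definite n×n matrix, Θ a real antisymmetric n×n matrix, 1 ≤ d ≤ n, S a real d×n matrix, and Ψ : ℝ^d → ℂ a Lebesgue-integrable function. Then for every u ∈ ℝⁿ the integral 𝔊_{μ,Σ}(u) := 2 ∫_{ℝ^d} sin(uᵀΘ Sᵀ v) Ψ(v) Φ_{μ,Σ}(u + Sᵀv) dv converges absolutely, |𝔊_{μ,Σ}(u)| ≤ 2 ∫_{ℝ^d} |Ψ(v)| dv for all u, and the function 𝔊_{μ,Σ} belongs to L²(ℝⁿ; ℂ). -/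

import Mathlib

open MeasureTheory Matrix Real

noncomputable section

/-- Quadratic form `uᵀ A u`. -/
def qf {n : ℕ} (A : Matrix (Fin n) (Fin n) ℝ) (u : Fin n → ℝ) : ℝ := u ⬝ᵥ A.mulVec u

/-- Gaussian quasi-characteristic function `Φ_{μ,Σ}(u) = exp(iμᵀu − (1/2)uᵀΣu)`. -/
def qcf {n : ℕ} (μ : Fin n → ℝ) (Sg : Matrix (Fin n) (Fin n) ℝ) (u : Fin n → ℝ) : ℂ :=
  Complex.exp (Complex.I * ((μ ⬝ᵥ u : ℝ) : ℂ) - (1/2 : ℂ) * ((qf Sg u : ℝ) : ℂ))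

/-- `𝔊_{μ,Σ}(u) := 2 ∫ sin(uᵀΘSᵀv) Ψ(v) Φ_{μ,Σ}(u + Sᵀv) dv`. -/
def Gfun {n d : ℕ} (μ : Fin n → ℝ) (Sg Th : Matrix (Fin n) (Fin n) ℝ)
    (S : Matrix (Fin d) (Fin n) ℝ) (Ψ : (Fin d → ℝ) → ℂ) (u : Fin n → ℝ) : ℂ :=
  2 * ∫ v : Fin d → ℝ,
    ((Real.sin (u ⬝ᵥ Th.mulVec (Sᵀ.mulVec v)) : ℝ) : ℂ) * Ψ v *
      qcf μ Sg (u + Sᵀ.mulVec v)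

open scoped ENNReal

section Aux

lemma continuous_mulVec' {m k : ℕ} (M : Matrix (Fin m) (Fin k) ℝ) :
    Continuous fun v : Fin k → ℝ => M.mulVec v := by
  unfold Matrix.mulVec dotProduct; fun_prop

lemma continuous_dotl' {m : ℕ} (w : Fin m → ℝ) :
    Continuous fun u : Fin m → ℝ => u ⬝ᵥ w := by
  unfold dotProduct; fun_prop

lemma continuous_dotr' {m : ℕ} (u : Fin m → ℝ) :
    Continuous fun w : Fin m → ℝ => u ⬝ᵥ w := by
  unfold dotProduct; fun_prop

lemma continuous_qf' {n : ℕ} (Sg : Matrix (Fin n) (Fin n) ℝ) : Continuous (qf Sg) := by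
  have : qf Sg = fun u => ∑ i, u i * ∑ j, Sg i j * u j := by
    funext u
    simp [qf, Matrix.mulVec, dotProduct]
  rw [this]; fun_prop

lemma continuous_qcf' {n : ℕ} (μ : Fin n → ℝ) (Sg : Matrix (Fin n) (Fin n) ℝ) :
    Continuous (qcf μ Sg) := by
  unfold qcf
  exact Complex.continuous_exp.comp <|
    (continuous_const.mul (Complex.continuous_ofReal.comp (continuous_dotr' μ))).sub
      (continuous_const.mul (Complex.continuous_ofReal.comp (continuous_qf' Sg)))

lemma qf_nonneg' {n : ℕ} {Sg : Matrix (Fin n) (Fin n) ℝ} (hpos : Sg.PosDef)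
    (u : Fin n → ℝ) : 0 ≤ qf Sg u := by
  have := hpos.posSemidef.dotProduct_mulVec_nonneg u
  simpa [qf] using this

lemma norm_qcf' {n : ℕ} (μ : Fin n → ℝ) (Sg : Matrix (Fin n) (Fin n) ℝ) (u : Fin n → ℝ) :
    ‖qcf μ Sg u‖ = Real.exp (-(1/2 * qf Sg u)) := by
  rw [qcf, Complex.norm_exp]
  norm_num [Complex.sub_re, Complex.mul_re]

lemma norm_qcf_le_one' {n : ℕ} {Sg : Matrix (Fin n) (Fin n) ℝ} (hpos : Sg.PosDef)
    (μ u : Fin n → ℝ) : ‖qcf μ Sg u‖ ≤ 1 := by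
  rw [norm_qcf', Real.exp_le_one_iff]
  nlinarith [qf_nonneg' hpos u]

lemma qf_smul' {n : ℕ} (Sg : Matrix (Fin n) (Fin n) ℝ) (a : ℝ) (u : Fin n → ℝ) :
    qf Sg (a • u) = a ^ 2 * qf Sg u := by
  simp only [qf, Matrix.mulVec_smul, smul_dotProduct, dotProduct_smul,
    smul_eq_mul]
  ring

lemma qf_lb' {n : ℕ} (hn : 1 ≤ n) {Sg : Matrix (Fin n) (Fin n) ℝ} (hpos : Sg.PosDef) :
    ∃ c : ℝ, 0 < c ∧ ∀ u : Fin n → ℝ, c * (∑ i, u i ^ 2) ≤ qf Sg u := by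
  set K : Set (Fin n → ℝ) := {u | ∑ i, u i ^ 2 = 1} with hK
  have hKc : IsClosed K := isClosed_eq (by fun_prop) continuous_const
  have hKsub : K ⊆ Metric.closedBall 0 1 := by
    intro u hu
    simp only [Metric.mem_closedBall, dist_zero_right]
    rw [pi_norm_le_iff_of_nonneg zero_le_one]
    intro i
    have hu' : (∑ j, u j ^ 2) = 1 := hu
    have h1 : u i ^ 2 ≤ 1 := by
      have := Finset.single_le_sum (f := fun j => u j ^ 2)
        (fun j _ => sq_nonneg (u j)) (Finset.mem_univ i)
      exact this.trans_eq hu'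
    rw [Real.norm_eq_abs]
    nlinarith [abs_nonneg (u i), sq_abs (u i)]
  have hKcomp : IsCompact K :=
    (isCompact_closedBall (0 : Fin n → ℝ) 1).of_isClosed_subset hKc hKsub
  have hKne : K.Nonempty := by
    refine ⟨Pi.single ⟨0, hn⟩ 1, ?_⟩
    simp [hK, Pi.single_apply, apply_ite (fun x : ℝ => x ^ 2)]
  obtain ⟨x0, hx0K, hx0min⟩ := hKcomp.exists_isMinOn hKne (continuous_qf' Sg).continuousOn
  have hx0ne : x0 ≠ 0 := by
    intro h
    rw [h] at hx0K
    simp [hK] at hx0K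
  refine ⟨qf Sg x0, ?_, ?_⟩
  · have := hpos.dotProduct_mulVec_pos hx0ne
    simpa [qf] using this
  · intro u
    rcases eq_or_ne u 0 with rfl | hu
    · simp [qf]
    · have hsum : 0 < ∑ i, u i ^ 2 := by
        obtain ⟨i, hi⟩ : ∃ i, u i ≠ 0 := by
          by_contra h
          push_neg at h
          exact hu (funext h)
        exact Finset.sum_pos' (fun j _ => sq_nonneg _) ⟨i, Finset.mem_univ i, by positivity⟩
      set r := Real.sqrt (∑ i, u i ^ 2) with hr
      have hrpos : 0 < r := Real.sqrt_pos.mpr hsum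
      have hrsq : r ^ 2 = ∑ i, u i ^ 2 := Real.sq_sqrt hsum.le
      have hmem : r⁻¹ • u ∈ K := by
        simp only [hK, Set.mem_setOf_eq, Pi.smul_apply, smul_eq_mul, mul_pow]
        rw [← Finset.mul_sum, ← hrsq]
        field_simp
      have hmin : qf Sg x0 ≤ qf Sg (r⁻¹ • u) := hx0min hmem
      rw [qf_smul'] at hmin
      have h2 := mul_le_mul_of_nonneg_right hmin (sq_nonneg r)
      have h3 : r⁻¹ ^ 2 * qf Sg u * r ^ 2 = qf Sg u := by
        field_simp
      rw [← hrsq]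
      nlinarith [h2, h3]

lemma integrable_exp_neg_qf' {n : ℕ} (hn : 1 ≤ n) {Sg : Matrix (Fin n) (Fin n) ℝ}
    (hpos : Sg.PosDef) :
    Integrable (fun u : Fin n → ℝ => Real.exp (-qf Sg u)) := by
  obtain ⟨c, hc, hlb⟩ := qf_lb' hn hpos
  have hint : Integrable (fun u : Fin n → ℝ => ∏ i, Real.exp (-c * u i ^ 2)) :=
    Integrable.fintype_prod (f := fun _ x => Real.exp (-c * x ^ 2))
      (fun _ => integrable_exp_neg_mul_sq hc)
  refine hint.mono' ((Real.continuous_exp.comp (continuous_qf' Sg).neg).aestronglyMeasurable)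
    (ae_of_all _ fun u => ?_)
  rw [Real.norm_eq_abs, abs_of_pos (Real.exp_pos _), ← Real.exp_sum]
  apply Real.exp_le_exp.mpr
  have hs : ∑ i, -c * u i ^ 2 = -(c * ∑ i, u i ^ 2) := by
    rw [Finset.mul_sum, ← Finset.sum_neg_distrib]
    exact Finset.sum_congr rfl fun i _ => by ring
  rw [hs]
  exact neg_le_neg (hlb u)

end Aux

/-- for integrable `Ψ`, the integral defining `𝔊_{μ,Σ}(u)` converges absolutely
for every `u`, `|𝔊_{μ,Σ}(u)| ≤ 2 ∫ |Ψ(v)| dv`, and `𝔊_{μ,Σ} ∈ L²(ℝⁿ;ℂ)`. -/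
theorem stmt14 {n d : ℕ} (hn : 1 ≤ n) (hd : 1 ≤ d) (hdn : d ≤ n)
    (μ : Fin n → ℝ) (Sg : Matrix (Fin n) (Fin n) ℝ) (hsymm : Sg.IsSymm) (hpos : Sg.PosDef)
    (Th : Matrix (Fin n) (Fin n) ℝ) (hanti : Thᵀ = -Th)
    (S : Matrix (Fin d) (Fin n) ℝ) (Ψ : (Fin d → ℝ) → ℂ) (hΨ : Integrable Ψ) :
    (∀ u : Fin n → ℝ,
      Integrable (fun v : Fin d → ℝ =>
        ((Real.sin (u ⬝ᵥ Th.mulVec (Sᵀ.mulVec v)) : ℝ) : ℂ) * Ψ v *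
          qcf μ Sg (u + Sᵀ.mulVec v))) ∧
    (∀ u : Fin n → ℝ,
      ‖Gfun μ Sg Th S Ψ u‖ ≤ 2 * ∫ v : Fin d → ℝ, ‖Ψ v‖) ∧
    MemLp (Gfun μ Sg Th S Ψ) 2 (volume : Measure (Fin n → ℝ)) := by
  set F : (Fin n → ℝ) → (Fin d → ℝ) → ℂ := fun u v =>
    ((Real.sin (u ⬝ᵥ Th.mulVec (Sᵀ.mulVec v)) : ℝ) : ℂ) * Ψ v *
      qcf μ Sg (u + Sᵀ.mulVec v) with hF
  -- measurability in v
  have hmeas : ∀ u, AEStronglyMeasurable (F u) volume := by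
    intro u
    have c1 : Continuous fun v : Fin d → ℝ =>
        ((Real.sin (u ⬝ᵥ Th.mulVec (Sᵀ.mulVec v)) : ℝ) : ℂ) :=
      Complex.continuous_ofReal.comp (Real.continuous_sin.comp
        ((continuous_dotr' u).comp ((continuous_mulVec' Th).comp (continuous_mulVec' Sᵀ))))
    have c2 : Continuous fun v : Fin d → ℝ => qcf μ Sg (u + Sᵀ.mulVec v) :=
      (continuous_qcf' μ Sg).comp (continuous_const.add (continuous_mulVec' Sᵀ))
    exact (c1.aestronglyMeasurable.mul hΨ.1).mul c2.aestronglyMeasurable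
  -- the pointwise bound ‖F u v‖ ≤ ‖Ψ v‖ * exp(-(1/2) qf(u+Sᵀv)) ≤ ‖Ψ v‖
  have hboundE : ∀ u v, ‖F u v‖ ≤ ‖Ψ v‖ * Real.exp (-(1/2 * qf Sg (u + Sᵀ.mulVec v))) := by
    intro u v
    rw [hF]
    simp only [norm_mul, Complex.norm_real, Real.norm_eq_abs, norm_qcf']
    have h1 : |Real.sin (u ⬝ᵥ Th.mulVec (Sᵀ.mulVec v))| ≤ 1 := Real.abs_sin_le_one _
    have := mul_le_mul_of_nonneg_right
      (mul_le_mul_of_nonneg_right h1 (norm_nonneg (Ψ v)))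
      (Real.exp_nonneg (-(1/2 * qf Sg (u + Sᵀ.mulVec v))))
    simpa using this
  have hbound : ∀ u v, ‖F u v‖ ≤ ‖Ψ v‖ := by
    intro u v
    refine (hboundE u v).trans ?_
    have : Real.exp (-(1/2 * qf Sg (u + Sᵀ.mulVec v))) ≤ 1 := by
      rw [Real.exp_le_one_iff]
      nlinarith [qf_nonneg' hpos (u + Sᵀ.mulVec v)]
    nlinarith [norm_nonneg (Ψ v)]
  -- Part 1
  have part1 : ∀ u, Integrable (F u) := fun u =>
    hΨ.norm.mono' (hmeas u) (ae_of_all _ (hbound u))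
  refine ⟨part1, ?_, ?_⟩
  -- Part 2
  · intro u
    have hval : ‖Gfun μ Sg Th S Ψ u‖ = 2 * ‖∫ v, F u v‖ := by
      rw [show Gfun μ Sg Th S Ψ u = 2 * ∫ v, F u v from rfl, norm_mul]
      norm_num
    rw [hval]
    have h2 : ‖∫ v, F u v‖ ≤ ∫ v, ‖F u v‖ := norm_integral_le_integral_norm _
    have h3 : ∫ v, ‖F u v‖ ≤ ∫ v, ‖Ψ v‖ :=
      integral_mono (part1 u).norm hΨ.norm (hbound u)
    linarith
  -- Part 3
  · have hGcont : Continuous (Gfun μ Sg Th S Ψ) := by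
      have : Continuous fun u : Fin n → ℝ => ∫ v, F u v := by
        refine continuous_of_dominated hmeas (fun u => ae_of_all _ (hbound u)) hΨ.norm
          (ae_of_all _ fun v => ?_)
        have c1 : Continuous fun u : Fin n → ℝ =>
            ((Real.sin (u ⬝ᵥ Th.mulVec (Sᵀ.mulVec v)) : ℝ) : ℂ) :=
          Complex.continuous_ofReal.comp (Real.continuous_sin.comp
            (continuous_dotl' (Th.mulVec (Sᵀ.mulVec v))))
        have c2 : Continuous fun u : Fin n → ℝ => qcf μ Sg (u + Sᵀ.mulVec v) :=
          (continuous_qcf' μ Sg).comp (continuous_id.add continuous_const)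
        exact (c1.mul continuous_const).mul c2
      exact continuous_const.mul this
    -- finiteness of the L² norm
    set x : (Fin d → ℝ) → ℝ≥0∞ := fun v => (‖Ψ v‖₊ : ℝ≥0∞) with hx
    set e : (Fin d → ℝ) → (Fin n → ℝ) → ℝ≥0∞ := fun v u =>
      ENNReal.ofReal (Real.exp (-(1/2 * qf Sg (u + Sᵀ.mulVec v)))) with he
    set A : ℝ≥0∞ := ∫⁻ v, x v with hA
    have hAlt : A < ⊤ := hΨ.2
    have hxmeas : AEMeasurable x volume := hΨ.1.enorm
    have hemeas : ∀ u, Measurable fun v => e v u := by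
      intro u
      apply Measurable.ennreal_ofReal
      exact (Real.continuous_exp.comp (continuous_const.mul ((continuous_qf' Sg).comp
        (continuous_const.add (continuous_mulVec' Sᵀ)))).neg).measurable
    -- Step I : pointwise bound on ‖Gfun u‖₊
    have hGle : ∀ u, (‖Gfun μ Sg Th S Ψ u‖₊ : ℝ≥0∞) ≤ 2 * ∫⁻ v, x v * e v u := by
      intro u
      have h0 : (‖Gfun μ Sg Th S Ψ u‖₊ : ℝ≥0∞) = 2 * (‖∫ v, F u v‖₊ : ℝ≥0∞) := by
        rw [show Gfun μ Sg Th S Ψ u = 2 * ∫ v, F u v from rfl]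
        push_cast [nnnorm_mul]
        norm_num
      rw [h0]
      have h1 : (‖∫ v, F u v‖₊ : ℝ≥0∞) ≤ ∫⁻ v, (‖F u v‖₊ : ℝ≥0∞) :=
        enorm_integral_le_lintegral_enorm _
      have h2 : (∫⁻ v, (‖F u v‖₊ : ℝ≥0∞)) ≤ ∫⁻ v, x v * e v u := by
        refine lintegral_mono fun v => ?_
        have hle1 : (‖F u v‖₊ : ℝ≥0∞)
            ≤ ENNReal.ofReal (‖Ψ v‖ * Real.exp (-(1/2 * qf Sg (u + Sᵀ.mulVec v)))) := by
          rw [← enorm_eq_nnnorm, ← ofReal_norm]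
          exact ENNReal.ofReal_le_ofReal (hboundE u v)
        refine hle1.trans ?_
        rw [ENNReal.ofReal_mul (norm_nonneg _), ofReal_norm, enorm_eq_nnnorm]
      calc 2 * (‖∫ v, F u v‖₊ : ℝ≥0∞) ≤ 2 * ∫⁻ v, (‖F u v‖₊ : ℝ≥0∞) := by gcongr
        _ ≤ 2 * ∫⁻ v, x v * e v u := by gcongr
    -- Step II : Cauchy–Schwarz
    have hCS : ∀ u, (∫⁻ v, x v * e v u) ^ 2 ≤ A * ∫⁻ v, x v * (e v u) ^ 2 := by
      intro u
      have hconj : (2 : ℝ).HolderConjugate 2 := by constructor <;> norm_num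
      have hf : AEMeasurable (fun v => x v ^ (1/2 : ℝ)) volume :=
        hxmeas.pow_const _
      have hg : AEMeasurable (fun v => x v ^ (1/2 : ℝ) * e v u) volume :=
        (hxmeas.pow_const _).mul (hemeas u).aemeasurable
      have key := ENNReal.lintegral_mul_le_Lp_mul_Lq volume hconj hf hg
      have hfg : ∀ v, ((fun v => x v ^ (1/2 : ℝ)) * fun v => x v ^ (1/2 : ℝ) * e v u) v
          = x v * e v u := by
        intro v
        simp only [Pi.mul_apply]
        rw [← mul_assoc, ← ENNReal.rpow_add_of_nonneg _ _ (by norm_num) (by norm_num)]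
        norm_num
      have hfp : ∀ v, (x v ^ (1/2 : ℝ)) ^ (2 : ℝ) = x v := by
        intro v
        rw [← ENNReal.rpow_mul]
        norm_num
      have hgp : ∀ v, (x v ^ (1/2 : ℝ) * e v u) ^ (2 : ℝ) = x v * (e v u) ^ 2 := by
        intro v
        rw [ENNReal.mul_rpow_of_nonneg _ _ (by norm_num : (0:ℝ) ≤ 2), hfp v,
          ← ENNReal.rpow_natCast (e v u) 2]
        norm_num
      rw [lintegral_congr hfg, lintegral_congr hfp, lintegral_congr hgp] at key
      calc (∫⁻ v, x v * e v u) ^ 2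
          ≤ ((∫⁻ v, x v) ^ (1/2 : ℝ) * (∫⁻ v, x v * (e v u) ^ 2) ^ (1/2 : ℝ)) ^ 2 := by
            gcongr
        _ = A * ∫⁻ v, x v * (e v u) ^ 2 := by
            rw [mul_pow, ← ENNReal.rpow_natCast ((∫⁻ v, x v) ^ (1/2:ℝ)) 2,
              ← ENNReal.rpow_natCast ((∫⁻ v, x v * (e v u) ^ 2) ^ (1/2:ℝ)) 2,
              ← ENNReal.rpow_mul, ← ENNReal.rpow_mul, hA]
            norm_num
    -- Step III : translation invariance and Tonelli
    set C : ℝ≥0∞ := ∫⁻ u : Fin n → ℝ, ENNReal.ofReal (Real.exp (-qf Sg u)) with hC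
    have hClt : C < ⊤ := (integrable_exp_neg_qf' hn hpos).lintegral_lt_top
    have hesq : ∀ v u, (e v u) ^ 2
        = ENNReal.ofReal (Real.exp (-qf Sg (u + Sᵀ.mulVec v))) := by
      intro v u
      rw [he]
      rw [← ENNReal.ofReal_pow (Real.exp_nonneg _), ← Real.exp_nat_mul]
      congr 2
      ring
    have hinner : ∀ v, (∫⁻ u : Fin n → ℝ, (e v u) ^ 2) = C := by
      intro v
      simp_rw [hesq]
      exact lintegral_add_right_eq_self
        (fun u => ENNReal.ofReal (Real.exp (-qf Sg u))) (Sᵀ.mulVec v)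
    have hswap : (∫⁻ u : Fin n → ℝ, ∫⁻ v, x v * (e v u) ^ 2) = A * C := by
      rw [lintegral_lintegral_swap]
      · have : ∀ v, (∫⁻ u : Fin n → ℝ, x v * (e v u) ^ 2) = x v * C := by
          intro v
          rw [lintegral_const_mul' _ _ ENNReal.coe_ne_top, hinner v]
        rw [lintegral_congr this, lintegral_mul_const' _ _ hClt.ne]
      · have h1 : AEMeasurable (fun p : (Fin n → ℝ) × (Fin d → ℝ) => x p.2)
            ((volume : Measure (Fin n → ℝ)).prod volume) := hxmeas.comp_snd
        have h2 : Measurable fun p : (Fin n → ℝ) × (Fin d → ℝ) => (e p.2 p.1) ^ 2 := by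
          apply Measurable.pow_const
          apply Measurable.ennreal_ofReal
          have : Continuous fun p : (Fin n → ℝ) × (Fin d → ℝ) =>
              Real.exp (-(1/2 * qf Sg (p.1 + Sᵀ.mulVec p.2))) := by
            apply Real.continuous_exp.comp
            apply Continuous.neg
            exact continuous_const.mul ((continuous_qf' Sg).comp
              (continuous_fst.add ((continuous_mulVec' Sᵀ).comp continuous_snd)))
          exact this.measurable
        exact h1.mul h2.aemeasurable
    -- assemble
    have hfin : (∫⁻ u : Fin n → ℝ, (‖Gfun μ Sg Th S Ψ u‖₊ : ℝ≥0∞) ^ 2) < ⊤ := by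
      have hle : (∫⁻ u : Fin n → ℝ, (‖Gfun μ Sg Th S Ψ u‖₊ : ℝ≥0∞) ^ 2)
          ≤ 4 * A * (A * C) := by
        calc (∫⁻ u : Fin n → ℝ, (‖Gfun μ Sg Th S Ψ u‖₊ : ℝ≥0∞) ^ 2)
            ≤ ∫⁻ u : Fin n → ℝ, 4 * A * ∫⁻ v, x v * (e v u) ^ 2 := by
              refine lintegral_mono fun u => ?_
              calc (‖Gfun μ Sg Th S Ψ u‖₊ : ℝ≥0∞) ^ 2
                  ≤ (2 * ∫⁻ v, x v * e v u) ^ 2 := by gcongr; exact hGle u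
                _ = 4 * (∫⁻ v, x v * e v u) ^ 2 := by rw [mul_pow]; norm_num
                _ ≤ 4 * (A * ∫⁻ v, x v * (e v u) ^ 2) := by gcongr; exact hCS u
                _ = 4 * A * ∫⁻ v, x v * (e v u) ^ 2 := by rw [mul_assoc]
          _ = 4 * A * ∫⁻ u : Fin n → ℝ, ∫⁻ v, x v * (e v u) ^ 2 := by
              rw [lintegral_const_mul' _ _ (ENNReal.mul_lt_top (by norm_num) hAlt).ne]
          _ = 4 * A * (A * C) := by rw [hswap]
      refine hle.trans_lt ?_
      have h4A : (4 : ℝ≥0∞) * A < ⊤ := ENNReal.mul_lt_top (by norm_num) hAlt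
      exact ENNReal.mul_lt_top h4A (ENNReal.mul_lt_top hAlt hClt)
    refine ⟨hGcont.aestronglyMeasurable, ?_⟩
    rw [eLpNorm_eq_lintegral_rpow_enorm_toReal two_ne_zero ENNReal.ofNat_ne_top]
    have htr : (2 : ℝ≥0∞).toReal = 2 := by simp
    rw [htr]
    simp only [enorm_eq_nnnorm]
    have : (∫⁻ u : Fin n → ℝ, (‖Gfun μ Sg Th S Ψ u‖₊ : ℝ≥0∞) ^ (2:ℝ))
        = ∫⁻ u : Fin n → ℝ, (‖Gfun μ Sg Th S Ψ u‖₊ : ℝ≥0∞) ^ 2 := by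
      refine lintegral_congr fun u => ?_
      rw [← ENNReal.rpow_natCast]
      norm_num
    rw [this]
    exact ENNReal.rpow_lt_top_of_nonneg (by norm_num) hfin.ne
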